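/- (Motzkin–Straus, easy direction plus optimality) For any finite simple graph G on n vertices (n ≥ 1), min{x^T(I + A_G)x : x ∈ Δ_n} = 1/α(G). -/

import Mathlib

open Matrix Finset
open scoped Classical

def IsStable {n : ℕ} (G : SimpleGraph (Fin n)) (S : Finset (Fin n)) : Prop :=
  ∀ i ∈ S, ∀ j ∈ S, ¬ G.Adj i j

noncomputable def alpha {n : ℕ} (G : SimpleGraph (Fin n)) : ℕ :=
  sSup {k | ∃ S : Finset (Fin n), IsStable G S ∧ S.card = k}

noncomputable def indic {n : ℕ} (S : Finset (Fin n)) : Fin n → ℝ :=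
  fun i => if i ∈ S then 1 else 0

noncomputable def qform {n : ℕ} (M : Matrix (Fin n) (Fin n) ℝ) (x : Fin n → ℝ) : ℝ :=
  x ⬝ᵥ M.mulVec x

noncomputable def fG {n : ℕ} (G : SimpleGraph (Fin n)) (x : Fin n → ℝ) : ℝ :=
  qform (1 + G.adjMatrix ℝ) x

noncomputable def globMin {n : ℕ} (f : (Fin n → ℝ) → ℝ) : Set (Fin n → ℝ) :=
  {x | x ∈ stdSimplex ℝ (Fin n) ∧ ∀ y ∈ stdSimplex ℝ (Fin n), f x ≤ f y}

-- ===== auxiliary lemmas =====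

lemma alphaSet_bdd {n : ℕ} (G : SimpleGraph (Fin n)) :
    BddAbove {k | ∃ S : Finset (Fin n), IsStable G S ∧ S.card = k} := by
  refine ⟨n, ?_⟩
  rintro k ⟨S, -, rfl⟩
  simpa using S.card_le_univ

lemma card_le_alpha {n : ℕ} {G : SimpleGraph (Fin n)} {S : Finset (Fin n)}
    (h : IsStable G S) : S.card ≤ alpha G :=
  le_csSup (alphaSet_bdd G) ⟨S, h, rfl⟩

lemma exists_max_stable {n : ℕ} (G : SimpleGraph (Fin n)) :
    ∃ S : Finset (Fin n), IsStable G S ∧ S.card = alpha G := by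
  have h := Nat.sSup_mem (s := {k | ∃ S : Finset (Fin n), IsStable G S ∧ S.card = k})
    ⟨0, ∅, by intro i hi; simp at hi, by simp⟩ (alphaSet_bdd G)
  exact h

lemma alpha_pos {n : ℕ} (hn : 0 < n) (G : SimpleGraph (Fin n)) : 0 < alpha G := by
  have h : IsStable G {⟨0, hn⟩} := by
    intro i hi j hj
    simp at hi hj
    subst hi; subst hj; simp
  have := card_le_alpha h
  exact Nat.lt_of_lt_of_le Nat.one_pos (by simpa using this)

lemma qsym {n : ℕ} {M : Matrix (Fin n) (Fin n) ℝ} (hM : M.IsSymm)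
    (x y : Fin n → ℝ) : x ⬝ᵥ M *ᵥ y = y ⬝ᵥ M *ᵥ x := by
  rw [Matrix.dotProduct_mulVec, ← Matrix.mulVec_transpose, hM.eq, dotProduct_comm]

lemma Msym {n : ℕ} (G : SimpleGraph (Fin n)) : (1 + G.adjMatrix ℝ).IsSymm := by
  unfold Matrix.IsSymm
  rw [Matrix.transpose_add, Matrix.transpose_one, SimpleGraph.transpose_adjMatrix]

lemma qform_add_smul {n : ℕ} {M : Matrix (Fin n) (Fin n) ℝ} (hM : M.IsSymm)
    (x w : Fin n → ℝ) (c : ℝ) :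
    qform M (x + c • w) = qform M x + 2 * c * (w ⬝ᵥ M *ᵥ x) + c ^ 2 * qform M w := by
  unfold qform
  rw [Matrix.mulVec_add, Matrix.mulVec_smul, dotProduct_add, add_dotProduct,
    add_dotProduct, dotProduct_smul, smul_dotProduct,
    smul_dotProduct, dotProduct_smul, qsym hM x w]
  simp [smul_eq_mul]; ring

lemma qform_double_sum {n : ℕ} (M : Matrix (Fin n) (Fin n) ℝ) (x : Fin n → ℝ) :
    qform M x = ∑ i, ∑ j, x i * M i j * x j := by
  unfold qform dotProduct Matrix.mulVec dotProduct
  simp [Finset.mul_sum, mul_assoc]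

lemma M_diag {n : ℕ} (G : SimpleGraph (Fin n)) (i : Fin n) :
    (1 + G.adjMatrix ℝ) i i = 1 := by
  simp [Matrix.add_apply]

lemma M_adj {n : ℕ} (G : SimpleGraph (Fin n)) {i j : Fin n} (h : G.Adj i j) :
    (1 + G.adjMatrix ℝ) i j = 1 := by
  simp [Matrix.add_apply, Matrix.one_apply_ne h.ne, h]

lemma M_nonadj {n : ℕ} (G : SimpleGraph (Fin n)) {i j : Fin n} (hij : i ≠ j)
    (h : ¬ G.Adj i j) : (1 + G.adjMatrix ℝ) i j = 0 := by
  simp [Matrix.add_apply, Matrix.one_apply_ne hij, h]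

/-- The key lower bound: for x in the simplex, fG x ≥ 1/α. -/
lemma fG_lower {n : ℕ} (G : SimpleGraph (Fin n)) :
    ∀ k (x : Fin n → ℝ), x ∈ stdSimplex ℝ (Fin n) →
      (univ.filter (fun i => x i ≠ 0)).card ≤ k → 1 / (alpha G : ℝ) ≤ fG G x := by
  intro k
  induction k with
  | zero =>
      intro x hx hcard
      exfalso
      have h0 : ∀ i, x i = 0 := by
        intro i
        by_contra h
        have : i ∈ univ.filter (fun i => x i ≠ 0) := by simp [h]
        have := Finset.card_pos.mpr ⟨i, this⟩
        omega
      have := hx.2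
      simp [h0] at this
  | succ k ih =>
      intro x hx hcard
      set S := univ.filter (fun i => x i ≠ 0) with hS
      by_cases hstab : IsStable G S
      · -- support stable: fG x = ∑ x_i², Cauchy-Schwarz
        have hSne : S.Nonempty := by
          by_contra h
          rw [Finset.not_nonempty_iff_eq_empty] at h
          have h0 : ∀ i, x i = 0 := by
            intro i
            by_contra hne
            have : i ∈ S := by simp [hS, hne]
            simp [h] at this
          have := hx.2
          simp [h0] at this
        have hSpos : 0 < S.card := Finset.card_pos.mpr hSne
        have hsumS : ∑ i ∈ S, x i = 1 := by
          rw [← hx.2]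
          apply Finset.sum_subset (Finset.subset_univ S)
          intro i _ hi
          simp [hS] at hi
          exact hi
        have hq : fG G x = ∑ i, ∑ j, x i * (1 + G.adjMatrix ℝ) i j * x j :=
          qform_double_sum _ _
        have hq2 : fG G x = ∑ i ∈ S, x i ^ 2 := by
          rw [hq]
          rw [← Finset.sum_subset (Finset.subset_univ S) (by
            intro i _ hi
            simp only [hS, Finset.mem_filter, Finset.mem_univ, true_and, not_not] at hi
            simp [hi])]
          apply Finset.sum_congr rfl
          intro i hiS
          rw [← Finset.sum_subset (Finset.subset_univ S) (by
            intro j _ hj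
            simp only [hS, Finset.mem_filter, Finset.mem_univ, true_and, not_not] at hj
            simp [hj])]
          rw [Finset.sum_eq_single i]
          · rw [M_diag]; ring
          · intro j hjS hji
            rw [M_nonadj G (Ne.symm hji) (hstab i hiS j hjS)]
            ring
          · intro h; exact absurd hiS h
        have hcs : (1:ℝ) ≤ (S.card : ℝ) * ∑ i ∈ S, x i ^ 2 := by
          have := sq_sum_le_card_mul_sum_sq (s := S) (f := x)
          rw [hsumS] at this
          simpa using this
        have hcardpos : (0:ℝ) < (S.card : ℝ) := by exact_mod_cast hSpos
        have h1 : 1 / (S.card : ℝ) ≤ fG G x := by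
          rw [hq2, div_le_iff₀ hcardpos] at *
          linarith [hcs]
        refine le_trans ?_ h1
        have hαpos : (0:ℝ) < (alpha G : ℝ) := by
          have := lt_of_lt_of_le hSpos (card_le_alpha hstab)
          exact_mod_cast this
        apply one_div_le_one_div_of_le hcardpos
        exact_mod_cast card_le_alpha hstab
      · -- support not stable: shift mass along an edge
        unfold IsStable at hstab
        push_neg at hstab
        obtain ⟨i₀, hi₀, j₀, hj₀, hadj₀⟩ := hstab
        set M := (1 + G.adjMatrix ℝ) with hM
        set u := M *ᵥ x with hu
        -- choose orientation so that u j ≤ u i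
        obtain ⟨i, j, hi, hj, hadj, hd⟩ :
            ∃ i j, i ∈ S ∧ j ∈ S ∧ G.Adj i j ∧ u j ≤ u i := by
          rcases le_total (u j₀) (u i₀) with h | h
          · exact ⟨i₀, j₀, hi₀, hj₀, hadj₀, h⟩
          · exact ⟨j₀, i₀, hj₀, hi₀, hadj₀.symm, h⟩
        have hij : i ≠ j := hadj.ne
        have hxi : x i ≠ 0 := by simpa [hS] using hi
        have hxj : x j ≠ 0 := by simpa [hS] using hj
        have hxi' : 0 < x i := lt_of_le_of_ne (hx.1 i) (Ne.symm hxi)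
        set w : Fin n → ℝ := Pi.single j 1 - Pi.single i 1 with hw
        set x' := x + (x i) • w with hx'
        have hx'i : x' i = 0 := by
          simp [hx', hw, Pi.single_apply, hij, Ne.symm hij]
        have hx'j : x' j = x j + x i := by
          simp [hx', hw, Pi.single_apply, hij, Ne.symm hij]
        have hx'k : ∀ k, k ≠ i → k ≠ j → x' k = x k := by
          intro k hki hkj
          simp [hx', hw, Pi.single_apply, hki, hkj]
        -- x' in simplex
        have hx'mem : x' ∈ stdSimplex ℝ (Fin n) := by
          constructor
          · intro k
            by_cases hki : k = i
            · subst hki; rw [hx'i]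
            · by_cases hkj : k = j
              · subst hkj; rw [hx'j]
                exact add_nonneg (hx.1 _) (hx.1 _)
              · rw [hx'k k hki hkj]; exact hx.1 k
          · have hwsum : ∑ k, w k = 0 := by
              simp [hw, Finset.sum_sub_distrib]
            have : ∑ k, x' k = ∑ k, x k + x i * ∑ k, w k := by
              simp [hx', Finset.sum_add_distrib, Finset.mul_sum]
            rw [this, hwsum, mul_zero, add_zero, hx.2]
        -- support shrinks
        have hsupp : (univ.filter (fun k => x' k ≠ 0)) ⊆ S.erase i := by
          intro k hk
          simp only [Finset.mem_filter, Finset.mem_univ, true_and] at hk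
          have hki : k ≠ i := by
            intro h; subst h; exact hk hx'i
          refine Finset.mem_erase.mpr ⟨hki, ?_⟩
          by_cases hkj : k = j
          · subst hkj; exact hj
          · rw [hx'k k hki hkj] at hk
            simp [hS, hk]
        have hcard' : (univ.filter (fun k => x' k ≠ 0)).card ≤ k := by
          have h1 := Finset.card_le_card hsupp
          have h2 : (S.erase i).card = S.card - 1 := Finset.card_erase_of_mem hi
          have h3 : 0 < S.card := Finset.card_pos.mpr ⟨i, hi⟩
          omega
        -- fG x' ≤ fG x
        have hMsym : M.IsSymm := Msym G
        have hqw : qform M w = 0 := by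
          have hMw : M *ᵥ w = (fun k => M k j) - (fun k => M k i) := by
            rw [hw, Matrix.mulVec_sub]
            simp [Matrix.mulVec_single]; rfl
          unfold qform
          rw [hMw, hw]
          simp only [sub_dotProduct, single_dotProduct, Pi.sub_apply, one_mul]
          rw [hM, M_diag, M_diag, M_adj G hadj, M_adj G hadj.symm]
          ring
        have hwd : w ⬝ᵥ M *ᵥ x = u j - u i := by
          rw [hw]
          simp only [sub_dotProduct, single_dotProduct, one_mul, hu]
        have hfx' : fG G x' = fG G x + 2 * x i * (u j - u i) := by
          rw [hx']
          show qform M (x + x i • w) = qform M x + 2 * x i * (u j - u i)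
          rw [qform_add_smul hMsym, hqw, hwd]
          ring
        have hle : fG G x' ≤ fG G x := by
          rw [hfx']
          nlinarith [hxi', hd]
        exact le_trans (ih x' hx'mem hcard') hle

theorem stmt_1 (n : ℕ) (hn : 0 < n) (G : SimpleGraph (Fin n)) :
    IsLeast (fG G '' stdSimplex ℝ (Fin n)) (1 / (alpha G : ℝ)) := by
  constructor
  · -- membership: uniform on a maximum stable set
    obtain ⟨S, hstab, hcard⟩ := exists_max_stable G
    have hαpos : 0 < alpha G := alpha_pos hn G
    have hSpos : 0 < S.card := hcard ▸ hαpos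
    have hcardR : (0:ℝ) < (S.card : ℝ) := by exact_mod_cast hSpos
    set x : Fin n → ℝ := (S.card : ℝ)⁻¹ • indic S with hxdef
    have hindic_sum : ∑ i, indic S i = (S.card : ℝ) := by
      unfold indic
      rw [Finset.sum_ite_mem]
      simp
    refine ⟨x, ⟨?_, ?_⟩, ?_⟩
    · intro i
      unfold x
      unfold indic
      by_cases h : i ∈ S <;> simp [h] <;> positivity
    · unfold x
      simp only [Pi.smul_apply, smul_eq_mul, ← Finset.mul_sum]
      rw [hindic_sum]
      field_simp
    · -- fG x = 1/α
      have hqind : qform (1 + G.adjMatrix ℝ) (indic S) = (S.card : ℝ) := by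
        rw [qform_double_sum]
        rw [← Finset.sum_subset (Finset.subset_univ S) (by
          intro i _ hi
          apply Finset.sum_eq_zero
          intro j _
          simp [indic, hi])]
        have hrow : ∀ i ∈ S, (∑ j, indic S i * (1 + G.adjMatrix ℝ) i j * indic S j) = 1 := by
          intro i hi
          rw [← Finset.sum_subset (Finset.subset_univ S) (by
            intro j _ hj
            simp [indic, hj])]
          rw [Finset.sum_eq_single i]
          · simp [indic, hi, M_diag]
          · intro j hj hji
            rw [M_nonadj G (Ne.symm hji) (hstab i hi j hj)]
            ring
          · intro h; exact absurd hi h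
        rw [Finset.sum_congr rfl hrow]
        simp
      have hfx : fG G x = 1 / (S.card : ℝ) := by
        unfold fG
        unfold x
        unfold qform at *
        rw [Matrix.mulVec_smul, dotProduct_smul, smul_dotProduct]
        rw [smul_eq_mul, smul_eq_mul, hqind]
        field_simp
      rw [hfx, hcard]
  · rintro b ⟨x, hx, rfl⟩
    apply fG_lower G n x hx
    calc (univ.filter (fun i => x i ≠ 0)).card ≤ (univ : Finset (Fin n)).card :=
          Finset.card_filter_le _ _
      _ = n := by simp
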